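/- Let d ≥ 2 and n ≥ 1 be integers, let p_1 ≥ p_2 ≥ … ≥ p_n be a non-increasing list of reals with p_i = d^{−a_i} for some a_i ∈ ℕ for each i, and let a ∈ ℕ with a ≤ a_1. If ∑_{i=1}^n p_i ≥ d^{−a}, then there exists m ≤ n with ∑_{i=1}^m p_i = d^{−a}. If furthermore ∑_{i=1}^n p_i = l·d^{−a} for some l ∈ ℕ, then there exist indices 0 = m_0 < m_1 < … < m_l = n such that ∑_{i=m_{j−1}+1}^{m_j} p_i = d^{−a} for every j ∈ {1,…,l} (i.e., [n] can be divided into l consecutive intervals each of total weight d^{−a}). -/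

import Mathlib

lemma pow_inv_le_le (d : ℕ) (hd : 2 ≤ d) {x y : ℕ} (h : ((d:ℝ)^x)⁻¹ ≤ ((d:ℝ)^y)⁻¹) : y ≤ x := by
  have hd1 : (1:ℝ) < (d:ℝ) := by exact_mod_cast hd.trans_lt' one_lt_two
  have h2 := inv_anti₀ (by positivity) h
  simp only [inv_inv] at h2
  exact (pow_le_pow_iff_right₀ hd1).mp h2

lemma part1 (d : ℕ) (hd : 2 ≤ d) (n : ℕ) (p : ℕ → ℝ) (a : ℕ) (A : ℕ → ℕ)
    (hA : ∀ i, 1 ≤ i → i ≤ n → p i = ((d:ℝ)^(A i))⁻¹)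
    (hAa : ∀ i, 1 ≤ i → i ≤ n → a ≤ A i)
    (hmono : ∀ i j, 1 ≤ i → i ≤ j → j ≤ n → p j ≤ p i)
    (h : ((d:ℝ)^a)⁻¹ ≤ ∑ i ∈ Finset.Icc 1 n, p i) :
    ∃ m, 1 ≤ m ∧ m ≤ n ∧ (∑ i ∈ Finset.Icc 1 m, p i) = ((d:ℝ)^a)⁻¹ := by
  classical
  have hd0 : (0:ℝ) < (d:ℝ) := by positivity
  have ht : (0:ℝ) < ((d:ℝ)^a)⁻¹ := by positivity
  have hP : ∃ m, ((d:ℝ)^a)⁻¹ ≤ ∑ i ∈ Finset.Icc 1 m, p i := ⟨n, h⟩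
  set m := Nat.find hP with hm
  have hPm : ((d:ℝ)^a)⁻¹ ≤ ∑ i ∈ Finset.Icc 1 m, p i := Nat.find_spec hP
  have hmn : m ≤ n := Nat.find_min' hP h
  have hm1 : 1 ≤ m := by
    rcases Nat.eq_zero_or_pos m with h0 | h1
    · exfalso
      rw [h0] at hPm
      simp only [show Finset.Icc 1 0 = ∅ from rfl, Finset.sum_empty] at hPm
      linarith
    · exact h1
  have hlt : ∑ i ∈ Finset.Icc 1 (m-1), p i < ((d:ℝ)^a)⁻¹ := by
    have := Nat.find_min hP (m := m - 1) (by omega)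
    push_neg at this
    exact this
  -- A i ≤ A m for i in [1, m]
  have hAle : ∀ i, 1 ≤ i → i ≤ m - 1 → A i ≤ A m := by
    intro i h1 h2
    have hpm : p m ≤ p i := hmono i m h1 (by omega) hmn
    rw [hA i h1 (by omega), hA m hm1 hmn] at hpm
    exact pow_inv_le_le d hd hpm
  set k : ℕ := ∑ i ∈ Finset.Icc 1 (m-1), d ^ (A m - A i) with hk
  have key : ∑ i ∈ Finset.Icc 1 (m-1), p i = (k : ℝ) * ((d:ℝ)^(A m))⁻¹ := by
    rw [hk]
    push_cast
    rw [Finset.sum_mul]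
    refine Finset.sum_congr rfl fun i hi => ?_
    rw [Finset.mem_Icc] at hi
    rw [hA i hi.1 (by omega)]
    have hle : A i ≤ A m := hAle i hi.1 hi.2
    have hne : (d:ℝ) ≠ 0 := by positivity
    field_simp
    rw [← pow_add]
    congr 1
    omega
  have haAm : a ≤ A m := hAa m hm1 hmn
  have hta : ((d:ℝ)^a)⁻¹ = (d:ℝ)^(A m - a) * ((d:ℝ)^(A m))⁻¹ := by
    have hne : (d:ℝ) ≠ 0 := by positivity
    field_simp
    rw [← pow_add]
    congr 1
    omega
  have hkd : k < d ^ (A m - a) := by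
    have h1 : (k : ℝ) * ((d:ℝ)^(A m))⁻¹ < (d:ℝ)^(A m - a) * ((d:ℝ)^(A m))⁻¹ := by
      rw [← key, ← hta]; exact hlt
    have h2 : (k : ℝ) < (d:ℝ)^(A m - a) :=
      lt_of_mul_lt_mul_right h1 (by positivity)
    exact_mod_cast h2
  have hSm : ∑ i ∈ Finset.Icc 1 m, p i = ((k : ℝ) + 1) * ((d:ℝ)^(A m))⁻¹ := by
    have : m = (m - 1) + 1 := by omega
    rw [this, Finset.sum_Icc_succ_top (by omega), ← this, key, hA m hm1 hmn]
    ring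
  have hle : ∑ i ∈ Finset.Icc 1 m, p i ≤ ((d:ℝ)^a)⁻¹ := by
    rw [hSm, hta]
    have : (k : ℝ) + 1 ≤ (d:ℝ)^(A m - a) := by exact_mod_cast hkd
    have hpos : (0:ℝ) < ((d:ℝ)^(A m))⁻¹ := by positivity
    nlinarith
  exact ⟨m, hm1, hmn, le_antisymm hle hPm⟩

lemma part2 (d : ℕ) (hd : 2 ≤ d) (a : ℕ) :
    ∀ (l n : ℕ) (p : ℕ → ℝ) (A : ℕ → ℕ),
    (∀ i, 1 ≤ i → i ≤ n → p i = ((d:ℝ)^(A i))⁻¹) →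
    (∀ i, 1 ≤ i → i ≤ n → a ≤ A i) →
    (∀ i j, 1 ≤ i → i ≤ j → j ≤ n → p j ≤ p i) →
    (∑ i ∈ Finset.Icc 1 n, p i) = l * ((d:ℝ)^a)⁻¹ →
    ∃ m : ℕ → ℕ, m 0 = 0 ∧ m l = n ∧ (∀ j j', j < j' → j' ≤ l → m j < m j') ∧
      ∀ j, 1 ≤ j → j ≤ l → (∑ i ∈ Finset.Icc (m (j-1) + 1) (m j), p i) = ((d:ℝ)^a)⁻¹ := by
  intro l
  induction l with
  | zero =>
    intro n p A hA hAa hmono hsum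
    have hn0 : n = 0 := by
      by_contra hne
      have h1n : 1 ≤ n := by omega
      have hpos : (0:ℝ) < ∑ i ∈ Finset.Icc 1 n, p i := by
        apply Finset.sum_pos
        · intro i hi
          rw [Finset.mem_Icc] at hi
          rw [hA i hi.1 hi.2]
          positivity
        · exact ⟨1, Finset.mem_Icc.mpr ⟨le_refl 1, h1n⟩⟩
      rw [hsum] at hpos
      simp at hpos
    subst hn0
    exact ⟨fun _ => 0, rfl, rfl, fun j j' hjj' hj' => absurd (hjj'.trans_le hj') (by omega),
      fun j hj1 hj2 => absurd (hj1.trans hj2) (by omega)⟩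
  | succ l ih =>
    intro n p A hA hAa hmono hsum
    have ht : (0:ℝ) < ((d:ℝ)^a)⁻¹ := by positivity
    have hge : ((d:ℝ)^a)⁻¹ ≤ ∑ i ∈ Finset.Icc 1 n, p i := by
      rw [hsum]
      have h0l : (0:ℝ) ≤ (l:ℝ) := Nat.cast_nonneg l
      push_cast
      nlinarith
    obtain ⟨m₁, hm1, hm1n, hSm1⟩ := part1 d hd n p a A hA hAa hmono hge
    have hsplit : ∑ i ∈ Finset.Icc 1 m₁, p i + ∑ i ∈ Finset.Icc (m₁+1) n, p i
        = ∑ i ∈ Finset.Icc 1 n, p i := by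
      rw [Finset.Icc_add_one_left_eq_Ioc, show Finset.Icc 1 m₁ = Finset.Ioc 0 m₁ from Finset.Icc_add_one_left_eq_Ioc (a := 0) (b := m₁),
        show Finset.Icc 1 n = Finset.Ioc 0 n from Finset.Icc_add_one_left_eq_Ioc (a := 0) (b := n)]
      exact Finset.sum_Ioc_consecutive p (Nat.zero_le m₁) hm1n
    have hrest : ∑ i ∈ Finset.Icc 1 (n - m₁), p (m₁ + i) = l * ((d:ℝ)^a)⁻¹ := by
      have hre : ∑ i ∈ Finset.Icc 1 (n - m₁), p (m₁ + i) = ∑ i ∈ Finset.Icc (m₁+1) n, p i := by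
        rw [show Finset.Icc (m₁+1) n = Finset.Icc (m₁+1) (m₁+(n-m₁)) from by congr 1; omega,
          ← Finset.map_add_left_Icc, Finset.sum_map]
        rfl
      rw [hre]
      have h2 := hsplit
      rw [hSm1, hsum] at h2
      push_cast at h2 ⊢
      linarith
    obtain ⟨m', hm'0, hm'l, hm'inc, hm'sum⟩ := ih (n - m₁) (fun i => p (m₁ + i)) (fun i => A (m₁ + i))
      (fun i h1 h2 => hA (m₁ + i) (by omega) (by omega))
      (fun i h1 h2 => hAa (m₁ + i) (by omega) (by omega))
      (fun i j h1 h2 h3 => hmono (m₁ + i) (m₁ + j) (by omega) (by omega) (by omega))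
      hrest
    refine ⟨fun j => if j = 0 then 0 else m₁ + m' (j - 1), rfl, ?_, ?_, ?_⟩
    · show (if l + 1 = 0 then 0 else m₁ + m' (l + 1 - 1)) = n
      rw [if_neg (by omega), Nat.add_sub_cancel, hm'l]
      omega
    · intro j j' hjj' hj'
      show (if j = 0 then 0 else m₁ + m' (j - 1)) < (if j' = 0 then 0 else m₁ + m' (j' - 1))
      rcases Nat.eq_zero_or_pos j with h0 | h1
      · rw [h0, if_pos rfl, if_neg (by omega : j' ≠ 0)]
        omega
      · rw [if_neg (by omega : j ≠ 0), if_neg (by omega : j' ≠ 0)]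
        have := hm'inc (j-1) (j'-1) (by omega) (by omega)
        omega
    · intro j hj1 hj2
      show (∑ i ∈ Finset.Icc ((if j - 1 = 0 then 0 else m₁ + m' (j - 1 - 1)) + 1)
          (if j = 0 then 0 else m₁ + m' (j - 1)), p i) = ((d:ℝ)^a)⁻¹
      rcases Nat.eq_or_lt_of_le hj1 with h1 | h2
      · rw [← h1]
        simp only [Nat.sub_self, if_pos rfl, if_neg (by omega : (1:ℕ) ≠ 0), hm'0, Nat.add_zero,
          Nat.zero_add]
        exact hSm1
      · rw [if_neg (by omega : j ≠ 0), if_neg (by omega : j - 1 ≠ 0)]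
        have hres := hm'sum (j - 1) (by omega) (by omega)
        rw [show Finset.Icc (m₁ + m' (j-1-1) + 1) (m₁ + m' (j-1)) =
            Finset.Icc (m₁ + (m' (j-1-1) + 1)) (m₁ + m' (j-1)) from by rw [add_assoc],
          ← Finset.map_add_left_Icc, Finset.sum_map]
        exact hres

/-- The "useful lemma": for a non-increasing list `p₁ ≥ … ≥ pₙ` of powers `d^{-aᵢ}` with
`a ≤ a₁`: if `∑ pᵢ ≥ d^{-a}` then some prefix sums to exactly `d^{-a}`; and if moreover
`∑ pᵢ = l·d^{-a}` then `[n]` splits into `l` consecutive intervals of weight `d^{-a}`. -/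
theorem useful_lemma (d n : ℕ) (hd : 2 ≤ d) (hn : 1 ≤ n) (p : ℕ → ℝ) (a : ℕ)
    (hmono : ∀ i j, 1 ≤ i → i ≤ j → j ≤ n → p j ≤ p i)
    (hpow : ∀ i, 1 ≤ i → i ≤ n → ∃ ai : ℕ, p i = ((d : ℝ) ^ ai)⁻¹)
    (ha : ∃ a₁ : ℕ, p 1 = ((d : ℝ) ^ a₁)⁻¹ ∧ a ≤ a₁) :
    (((d : ℝ) ^ a)⁻¹ ≤ (∑ i ∈ Finset.Icc 1 n, p i) →
      ∃ m : ℕ, m ≤ n ∧ (∑ i ∈ Finset.Icc 1 m, p i) = ((d : ℝ) ^ a)⁻¹) ∧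
    (∀ l : ℕ, (∑ i ∈ Finset.Icc 1 n, p i) = l * ((d : ℝ) ^ a)⁻¹ →
      ∃ m : ℕ → ℕ, m 0 = 0 ∧ m l = n ∧
        (∀ j j', j < j' → j' ≤ l → m j < m j') ∧
        ∀ j, 1 ≤ j → j ≤ l →
          (∑ i ∈ Finset.Icc (m (j - 1) + 1) (m j), p i) = ((d : ℝ) ^ a)⁻¹) := by
  obtain ⟨a₁, hpa1, haa1⟩ := ha
  choose! A hA using hpow
  have hAa : ∀ i, 1 ≤ i → i ≤ n → a ≤ A i := by
    intro i h1 h2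
    have hle := hmono 1 i le_rfl h1 h2
    rw [hA i h1 h2, hpa1] at hle
    exact haa1.trans (pow_inv_le_le d hd hle)
  constructor
  · intro h
    obtain ⟨m, _, hmn, hs⟩ := part1 d hd n p a A hA hAa hmono h
    exact ⟨m, hmn, hs⟩
  · intro l hl
    exact part2 d hd a l n p A hA hAa hmono hl
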